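/- Let l ≥ 1, let U ⊆ ℝ^l be open and convex, and let h : U → ℝ^l be twice continuously differentiable with components h₁,…,h_l. Let a, b ∈ U with h(a) = 0. Suppose M ≥ 0 is such that for every j and every ξ ∈ U, the operator norm of the Hessian matrix of h_j at ξ is at most M. Suppose the Jacobian matrix S = Dh(a) is invertible and K ≥ ‖S⁻¹‖ (operator norm). If K·√l·M·‖b−a‖ ≤ 1, then ‖b−a‖ ≤ 2K·‖h(b)‖. -/

import Mathlib

open Set

/-- Auxiliary: second-order Taylor bound for a real-valued `C²` function on an open
convex set, with Hessian norm bounded by `M`. -/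
lemma taylor_component_bound
    {E : Type*} [NormedAddCommGroup E] [NormedSpace ℝ E]
    (U : Set E) (hUopen : IsOpen U) (hUconv : Convex ℝ U)
    (f : E → ℝ) (hf : ContDiffOn ℝ 2 f U)
    (a b : E) (ha : a ∈ U) (hb : b ∈ U)
    (M : ℝ) (hM0 : 0 ≤ M)
    (hM : ∀ ξ ∈ U, ‖iteratedFDerivWithin ℝ 2 f U ξ‖ ≤ M) :
    |f b - f a - fderivWithin ℝ f U a (b - a)| ≤ M / 2 * ‖b - a‖ ^ 2 := by
  have ud : UniqueDiffOn ℝ U := hUopen.uniqueDiffOn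
  set v := b - a with hv
  set f' := fderivWithin ℝ f U with hf'
  have hdf : DifferentiableOn ℝ f U := hf.differentiableOn (by norm_num)
  have hdf' : DifferentiableOn ℝ f' U :=
    (hf.fderivWithin (m := 1) ud (by norm_num)).differentiableOn one_ne_zero
  have hbound2 : ∀ ξ ∈ U, ‖fderivWithin ℝ f' U ξ‖ ≤ M := by
    intro ξ hξ
    refine ContinuousLinearMap.opNorm_le_bound _ hM0 fun u => ?_
    refine ContinuousLinearMap.opNorm_le_bound _ (by positivity) fun w => ?_
    have h2 : iteratedFDerivWithin ℝ 2 f U ξ ![u, w]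
        = fderivWithin ℝ f' U ξ u w := iteratedFDerivWithin_two_apply f ud hξ _
    calc ‖fderivWithin ℝ f' U ξ u w‖ = ‖iteratedFDerivWithin ℝ 2 f U ξ ![u, w]‖ := by rw [h2]
      _ ≤ ‖iteratedFDerivWithin ℝ 2 f U ξ‖ * ∏ i, ‖(![u, w]) i‖ :=
          (iteratedFDerivWithin ℝ 2 f U ξ).le_opNorm _
      _ ≤ M * (‖u‖ * ‖w‖) := by
          rw [Fin.prod_univ_two]
          gcongr
          · exact hM ξ hξ
          · simp
          · simp
      _ = M * ‖u‖ * ‖w‖ := by ring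
  have hlip : ∀ y ∈ U, ‖f' y - f' a‖ ≤ M * ‖y - a‖ := fun y hy =>
    hUconv.norm_image_sub_le_of_norm_fderivWithin_le hdf' hbound2 ha hy
  have hmem : ∀ t ∈ Icc (0:ℝ) 1, a + t • v ∈ U := fun t ht =>
    hUconv.add_smul_sub_mem ha hb ht
  set g : ℝ → ℝ := fun t => f (a + t • v) - t * f' a v with hg
  set g' : ℝ → ℝ := fun t => f' (a + t • v) v - f' a v with hg'
  have hgd : ∀ t ∈ Icc (0:ℝ) 1, HasDerivWithinAt g (g' t) (Icc 0 1) t := by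
    intro t ht
    have hc : HasDerivWithinAt (fun s : ℝ => a + s • v) v (Icc 0 1) t := by
      simpa using (((hasDerivAt_id t).smul_const v).const_add a).hasDerivWithinAt
        (s := Icc (0:ℝ) 1)
    have hF : HasFDerivWithinAt f (f' (a + t • v)) U (a + t • v) :=
      (hdf _ (hmem t ht)).hasFDerivWithinAt
    have h1 : HasDerivWithinAt (fun s : ℝ => f (a + s • v)) (f' (a + t • v) v)
        (Icc 0 1) t := hF.comp_hasDerivWithinAt t hc fun s hs => hmem s hs
    exact h1.sub ((hasDerivAt_mul_const (f' a v)).hasDerivWithinAt)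
  have key : ∀ x ∈ Icc (0:ℝ) 1, ‖g x - g 0‖ ≤ M * ‖v‖ ^ 2 / 2 * x ^ 2 := by
    intro x hx
    refine image_norm_le_of_norm_deriv_right_le_deriv_boundary
      (f := fun t => g t - g 0) (f' := g')
      (fun t ht => ((hgd t ht).continuousWithinAt).sub continuousWithinAt_const)
      (fun t ht => ?_) (by simp)
      (B := fun t => M * ‖v‖ ^ 2 / 2 * t ^ 2) (B' := fun t => M * ‖v‖ ^ 2 * t)
      (fun t => by
        have := (hasDerivAt_pow 2 t).const_mul (M * ‖v‖ ^ 2 / 2)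
        exact this.congr_deriv (by norm_num; ring)) (fun t ht => ?_) hx
    · have := (((hgd t (Ico_subset_Icc_self ht)).sub
        (hasDerivWithinAt_const _ _ (g 0))).mono_of_mem_nhdsWithin
          (Icc_mem_nhdsGE_of_mem ht))
      rw [sub_zero] at this
      exact this
    · have htU : a + t • v ∈ U := hmem t (Ico_subset_Icc_self ht)
      have h0 : ‖g' t‖ ≤ ‖f' (a + t • v) - f' a‖ * ‖v‖ := by
        simpa [hg'] using ((f' (a + t • v) - f' a).le_opNorm v)
      have h1 : ‖f' (a + t • v) - f' a‖ ≤ M * (t * ‖v‖) := by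
        have := hlip _ htU
        simpa [norm_smul, abs_of_nonneg ht.1] using this
      calc ‖g' t‖ ≤ M * (t * ‖v‖) * ‖v‖ := h0.trans (by
            apply mul_le_mul_of_nonneg_right h1 (norm_nonneg v))
        _ = M * ‖v‖ ^ 2 * t := by ring
  have k1 := key 1 (right_mem_Icc.2 zero_le_one)
  have hg1 : g 1 = f b - f' a v := by simp [hg, hv]
  have hg0 : g 0 = f a := by simp [hg]
  rw [hg1, hg0] at k1
  calc |f b - f a - f' a v| = ‖f b - f' a v - f a‖ := by rw [Real.norm_eq_abs]; ring_nf
    _ ≤ M * ‖v‖ ^ 2 / 2 * 1 ^ 2 := k1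
    _ = M / 2 * ‖v‖ ^ 2 := by ring

/-- deterministic second-order Taylor bound. Let `h : U → ℝ^l` be `C²`
on an open convex `U`, with `h(a) = 0`, Hessians of all components bounded in norm
by `M` on `U`, and invertible Jacobian `S = Dh(a)` with `‖S⁻¹‖ ≤ K`. If
`K √l M ‖b−a‖ ≤ 1` then `‖b−a‖ ≤ 2 K ‖h(b)‖`. -/
theorem taylor_zero_proximity_bound
    (l : ℕ) (hl : 1 ≤ l)
    (U : Set (EuclideanSpace ℝ (Fin l))) (hUopen : IsOpen U) (hUconv : Convex ℝ U)
    (h : EuclideanSpace ℝ (Fin l) → EuclideanSpace ℝ (Fin l))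
    (hh : ContDiffOn ℝ 2 h U)
    (a b : EuclideanSpace ℝ (Fin l)) (ha : a ∈ U) (hb : b ∈ U)
    (hha : h a = 0)
    (M : ℝ) (hM0 : 0 ≤ M)
    (hHess : ∀ j : Fin l, ∀ ξ ∈ U,
      ‖iteratedFDerivWithin ℝ 2 (fun x => h x j) U ξ‖ ≤ M)
    (Sinv : EuclideanSpace ℝ (Fin l) →L[ℝ] EuclideanSpace ℝ (Fin l))
    (hSinv1 : Sinv.comp (fderivWithin ℝ h U a) =
      ContinuousLinearMap.id ℝ (EuclideanSpace ℝ (Fin l)))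
    (hSinv2 : (fderivWithin ℝ h U a).comp Sinv =
      ContinuousLinearMap.id ℝ (EuclideanSpace ℝ (Fin l)))
    (K : ℝ) (hK : ‖Sinv‖ ≤ K)
    (hsmall : K * Real.sqrt l * M * ‖b - a‖ ≤ 1) :
    ‖b - a‖ ≤ 2 * K * ‖h b‖ := by
  have ud : UniqueDiffOn ℝ U := hUopen.uniqueDiffOn
  set v := b - a with hv
  set D := fderivWithin ℝ h U a with hD
  have hdiff : DifferentiableOn ℝ h U := hh.differentiableOn (by norm_num)
  have hK0 : 0 ≤ K := le_trans (norm_nonneg _) hK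
  -- componentwise Taylor bound
  have hcomp : ∀ j : Fin l, |h b j - D v j| ≤ M / 2 * ‖v‖ ^ 2 := by
    intro j
    have hfC2 : ContDiffOn ℝ 2 (fun x => h x j) U :=
      (EuclideanSpace.proj (𝕜 := ℝ) j).contDiff.comp_contDiffOn hh
    have htaylor := taylor_component_bound U hUopen hUconv (fun x => h x j) hfC2
      a b ha hb M hM0 (hHess j)
    have hder : fderivWithin ℝ (fun x => h x j) U a
        = (EuclideanSpace.proj (𝕜 := ℝ) j).comp D := by
      have hF : HasFDerivWithinAt (fun x => h x j)
          ((EuclideanSpace.proj (𝕜 := ℝ) j).comp D) U a :=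
        ((EuclideanSpace.proj (𝕜 := ℝ) j).hasFDerivAt).comp_hasFDerivWithinAt a
          (hdiff a ha).hasFDerivWithinAt
      exact hF.fderivWithin (ud a ha)
    rw [hder] at htaylor
    have hza : h a j = 0 := by rw [hha]; rfl
    simpa [hza, hv] using htaylor
  -- Euclidean norm of the remainder
  have hc0 : (0:ℝ) ≤ M / 2 * ‖v‖ ^ 2 := by positivity
  have hw : ‖h b - D v‖ ≤ Real.sqrt l * (M / 2 * ‖v‖ ^ 2) := by
    rw [EuclideanSpace.norm_eq]
    have hsum : ∑ j, ‖(h b - D v) j‖ ^ 2 ≤ (l : ℝ) * (M / 2 * ‖v‖ ^ 2) ^ 2 := by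
      calc ∑ j, ‖(h b - D v) j‖ ^ 2 ≤ ∑ _j : Fin l, (M / 2 * ‖v‖ ^ 2) ^ 2 := by
            refine Finset.sum_le_sum fun j _ => ?_
            have : ‖(h b - D v) j‖ = |h b j - D v j| := by
              rfl
            rw [this]
            exact pow_le_pow_left₀ (abs_nonneg _) (hcomp j) 2
        _ = (l : ℝ) * (M / 2 * ‖v‖ ^ 2) ^ 2 := by
            simp [Finset.sum_const, nsmul_eq_mul]
    calc Real.sqrt (∑ j, ‖(h b - D v) j‖ ^ 2)
        ≤ Real.sqrt ((l : ℝ) * (M / 2 * ‖v‖ ^ 2) ^ 2) := Real.sqrt_le_sqrt hsum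
      _ = Real.sqrt l * (M / 2 * ‖v‖ ^ 2) := by
          rw [Real.sqrt_mul (Nat.cast_nonneg l), Real.sqrt_sq hc0]
  -- invert the Jacobian
  have hvS : Sinv (D v) = v := by
    have := congrArg (fun T => T v) hSinv1
    simpa using this
  have hmain : ‖v‖ ≤ K * ‖h b‖ + K * ‖h b - D v‖ := by
    calc ‖v‖ = ‖Sinv (D v)‖ := by rw [hvS]
      _ = ‖Sinv (h b) - Sinv (h b - D v)‖ := by
          congr 1
          rw [← ContinuousLinearMap.map_sub]
          congr 1
          abel
      _ ≤ ‖Sinv (h b)‖ + ‖Sinv (h b - D v)‖ := norm_sub_le _ _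
      _ ≤ ‖Sinv‖ * ‖h b‖ + ‖Sinv‖ * ‖h b - D v‖ := by
          gcongr <;> exact Sinv.le_opNorm _
      _ ≤ K * ‖h b‖ + K * ‖h b - D v‖ := by gcongr
  have hrem : K * ‖h b - D v‖ ≤ ‖v‖ / 2 := by
    have h1 : K * ‖h b - D v‖ ≤ K * (Real.sqrt l * (M / 2 * ‖v‖ ^ 2)) := by gcongr
    have h2 : K * (Real.sqrt l * (M / 2 * ‖v‖ ^ 2))
        = (K * Real.sqrt l * M * ‖v‖) * (‖v‖ / 2) := by ring
    have h3 : (K * Real.sqrt l * M * ‖v‖) * (‖v‖ / 2) ≤ 1 * (‖v‖ / 2) := by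
      apply mul_le_mul_of_nonneg_right hsmall (by positivity)
    linarith [h1, h2 ▸ h1]
  linarith [hmain, hrem]
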